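/- Let ℓ : [a,b] → Λ(V, ω) be a C¹ path of Lagrangian subspaces and L₀ a fixed Lagrangian subspace such that at every crossing instant t₀ (i.e., every t₀ with ℓ(t₀) ∩ L₀ ≠ {0}) the crossing form Γ(ℓ, L₀, t₀) is non-degenerate. Then the set of crossing instants in [a, b] is finite. -/

import Mathlib

open Matrix Filter Topology



/-- The standard complex structure `J₀ = [[0, -Id], [Id, 0]]` on `ℝ²ⁿ`. -/
noncomputable def J₀ (n : ℕ) : Matrix (Fin n ⊕ Fin n) (Fin n ⊕ Fin n) ℝ :=
  Matrix.fromBlocks 0 (-1) 1 0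

/-- The standard symplectic form `ω₀(z, w) = ⟨J₀ z, w⟩` on `ℝ²ⁿ`. -/
noncomputable def ω₀ (n : ℕ) (z w : Fin n ⊕ Fin n → ℝ) : ℝ :=
  (J₀ n).mulVec z ⬝ᵥ w

lemma J₀_transpose (n : ℕ) : (J₀ n)ᵀ = -(J₀ n) := by
  simp [J₀, Matrix.fromBlocks_transpose, Matrix.fromBlocks_neg]

lemma J₀_mul_J₀ (n : ℕ) : J₀ n * J₀ n = -1 := by
  simp [J₀, Matrix.fromBlocks_multiply, ← Matrix.fromBlocks_one, Matrix.fromBlocks_neg]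

lemma det_J₀_ne_zero (n : ℕ) : (J₀ n).det ≠ 0 := by
  intro h
  have h2 : ((J₀ n) * (J₀ n)).det = ((-1 : Matrix (Fin n ⊕ Fin n) (Fin n ⊕ Fin n) ℝ)).det := by
    rw [J₀_mul_J₀]
  rw [Matrix.det_mul, h, mul_zero] at h2
  have h3 : ((-1 : Matrix (Fin n ⊕ Fin n) (Fin n ⊕ Fin n) ℝ)).det = 1 := by
    have h4 := Matrix.det_neg (1 : Matrix (Fin n ⊕ Fin n) (Fin n ⊕ Fin n) ℝ)
    simp only [Matrix.det_one, mul_one] at h4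
    rw [h4]
    simp [Fintype.card_sum, Even.neg_one_pow ⟨n, rfl⟩]
  rw [h3] at h2
  exact one_ne_zero h2.symm

lemma dot_aux {m : Type*} [Fintype m] (A : Matrix m m ℝ) (x y : m → ℝ) :
    (A *ᵥ x) ⬝ᵥ y = x ⬝ᵥ (Aᵀ *ᵥ y) := by
  rw [Matrix.dotProduct_mulVec, Matrix.vecMul_transpose]

set_option maxHeartbeats 2000000 in
set_option maxHeartbeats 1000000 in
/-- let `ℓ(t) = ψ(t) L` be a `C¹` path of Lagrangian subspaces (given by a
`C¹` path `ψ` of symplectic matrices acting on a Lagrangian `L`) and `L₀` a fixed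
Lagrangian.  If at every crossing instant `t₀` (i.e. `ℓ(t₀) ∩ L₀ ≠ {0}`) the crossing form
`Γ(ℓ, L₀, t₀)(w) = ⟨J₀ᵀ ψ'(t₀) ψ(t₀)⁻¹ w, w⟩` is non-degenerate on `ℓ(t₀) ∩ L₀`, then the
set of crossing instants in `[a,b]` is finite. -/
theorem regular_crossings_finite {n : ℕ} (a b : ℝ)
    (ψ ψ' : ℝ → Matrix (Fin n ⊕ Fin n) (Fin n ⊕ Fin n) ℝ)
    (hderiv : ∀ i j, ∀ t, HasDerivAt (fun s => ψ s i j) (ψ' t i j) t)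
    (hC1 : ∀ i j, Continuous fun t => ψ' t i j)
    (hsymp : ∀ t, (ψ t)ᵀ * J₀ n * ψ t = J₀ n)
    (L L₀ : Submodule ℝ (Fin n ⊕ Fin n → ℝ))
    (hLiso : ∀ x ∈ L, ∀ y ∈ L, ω₀ n x y = 0) (hLdim : Module.finrank ℝ L = n)
    (hL₀iso : ∀ x ∈ L₀, ∀ y ∈ L₀, ω₀ n x y = 0) (hL₀dim : Module.finrank ℝ L₀ = n)
    (hreg : ∀ t₀ ∈ Set.Icc a b,
      L.map (Matrix.mulVecLin (ψ t₀)) ⊓ L₀ ≠ ⊥ →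
      ∀ w ∈ L.map (Matrix.mulVecLin (ψ t₀)) ⊓ L₀,
        (∀ u ∈ L.map (Matrix.mulVecLin (ψ t₀)) ⊓ L₀,
          ((J₀ n)ᵀ * ψ' t₀ * (ψ t₀)⁻¹).mulVec w ⬝ᵥ u = 0) → w = 0) :
    {t ∈ Set.Icc a b | L.map (Matrix.mulVecLin (ψ t)) ⊓ L₀ ≠ ⊥}.Finite := by
  classical
  set K : ℝ → Submodule ℝ (Fin n ⊕ Fin n → ℝ) :=
    fun t => L.map (Matrix.mulVecLin (ψ t)) ⊓ L₀ with hKdef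
  -- continuity of ψ
  have hψc : Continuous ψ := continuous_matrix fun i j =>
    continuous_iff_continuousAt.mpr fun t => (hderiv i j t).continuousAt
  -- invertibility of ψ t
  have hdet : ∀ t, IsUnit (ψ t).det := by
    intro t
    have h := congrArg Matrix.det (hsymp t)
    rw [Matrix.det_mul, Matrix.det_mul, Matrix.det_transpose] at h
    have hJ := det_J₀_ne_zero n
    have hdd : (ψ t).det * (ψ t).det = 1 := by
      apply mul_right_cancel₀ hJ
      linear_combination h
    refine isUnit_iff_ne_zero.mpr fun h0 => ?_
    rw [h0, zero_mul] at hdd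
    exact zero_ne_one hdd
  -- continuity of the inverse
  have hψinvc : Continuous fun t => (ψ t)⁻¹ := by
    have heq : (fun t => (ψ t)⁻¹) = fun t => ((ψ t).det)⁻¹ • (ψ t).adjugate := by
      funext t
      rw [Matrix.inv_def, Ring.inverse_eq_inv]
    rw [heq]
    exact (hψc.matrix_det.inv₀ fun t => (hdet t).ne_zero).smul hψc.matrix_adjugate
  -- symplectic invariance of ω₀
  have hsympform : ∀ t (p q : Fin n ⊕ Fin n → ℝ), ω₀ n (ψ t *ᵥ p) (ψ t *ᵥ q) = ω₀ n p q := by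
    intro t p q
    have hmat : ((J₀ n) * ψ t)ᵀ * ψ t = (J₀ n)ᵀ := by
      rw [Matrix.transpose_mul, J₀_transpose, Matrix.mul_neg, Matrix.neg_mul, hsymp t]
    unfold ω₀
    rw [Matrix.mulVec_mulVec, dot_aux, Matrix.mulVec_mulVec, hmat, ← dot_aux]
  -- suppose the set of crossings is infinite
  by_contra hfin
  obtain ⟨t₀, ht₀I, hacc⟩ := Set.Infinite.exists_accPt_of_subset_isCompact hfin
    isCompact_Icc (fun t ht => ht.1)
  rw [accPt_principal_iff_clusterPt, ← mem_closure_iff_clusterPt] at hacc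
  obtain ⟨ts, hts, htends⟩ := mem_closure_iff_seq_limit.mp hacc
  -- choose nonzero unit vectors in the intersections
  choose x hxK hx0 using fun k => Submodule.exists_mem_ne_zero_of_ne_bot (hts k).1.2
  set z : ℕ → (Fin n ⊕ Fin n → ℝ) := fun k => ‖x k‖⁻¹ • x k with hzdef
  have hzsph : ∀ k, z k ∈ Metric.sphere (0 : Fin n ⊕ Fin n → ℝ) 1 := by
    intro k
    rw [mem_sphere_zero_iff_norm, hzdef]
    simp [norm_smul, inv_mul_cancel₀ (norm_ne_zero_iff.mpr (hx0 k))]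
  have hzK : ∀ k, z k ∈ K (ts k) := fun k => Submodule.smul_mem _ _ (hxK k)
  obtain ⟨xlim, hxlims, φ, hφ, hzφ⟩ :=
    (isCompact_sphere (0 : Fin n ⊕ Fin n → ℝ) 1).tendsto_subseq hzsph
  set s : ℕ → ℝ := ts ∘ φ with hsdef
  have hsne : ∀ k, s k ≠ t₀ := fun k => (hts (φ k)).2
  have hstends : Tendsto s atTop (𝓝 t₀) := htends.comp hφ.tendsto_atTop
  set z' : ℕ → (Fin n ⊕ Fin n → ℝ) := z ∘ φ with hz'def
  have hz'K : ∀ k, z' k ∈ K (s k) := fun k => hzK (φ k)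
  have hz'lim : Tendsto z' atTop (𝓝 xlim) := hzφ
  -- pull back to L
  set v : ℕ → (Fin n ⊕ Fin n → ℝ) := fun k => (ψ (s k))⁻¹ *ᵥ z' k with hvdef
  have hrec : ∀ k, ψ (s k) *ᵥ v k = z' k := by
    intro k
    rw [hvdef]
    simp only
    rw [Matrix.mulVec_mulVec, Matrix.mul_nonsing_inv _ (hdet _), Matrix.one_mulVec]
  have hvL : ∀ k, v k ∈ L := by
    intro k
    obtain ⟨w, hwL, hw⟩ := Submodule.mem_map.mp (Submodule.mem_inf.mp (hz'K k)).1
    have hrw : v k = w := by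
      rw [hvdef]
      simp only
      rw [← hw, Matrix.mulVecLin_apply, Matrix.mulVec_mulVec,
        Matrix.nonsing_inv_mul _ (hdet _), Matrix.one_mulVec]
    rw [hrw]; exact hwL
  have hcont2 : Continuous fun p : ℝ × (Fin n ⊕ Fin n → ℝ) => (ψ p.1)⁻¹ *ᵥ p.2 :=
    (hψinvc.comp continuous_fst).matrix_mulVec continuous_snd
  set vlim2 : Fin n ⊕ Fin n → ℝ := (ψ t₀)⁻¹ *ᵥ xlim with hvlim2def
  have hvlim : Tendsto v atTop (𝓝 vlim2) := by
    have h := (hcont2.tendsto (t₀, xlim)).comp (hstends.prodMk_nhds hz'lim)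
    simpa only [Function.comp_def] using h
  have hvlim2L : vlim2 ∈ L :=
    (Submodule.closed_of_finiteDimensional L).mem_of_tendsto hvlim
      (Filter.Eventually.of_forall hvL)
  have hxlimL₀ : xlim ∈ L₀ :=
    (Submodule.closed_of_finiteDimensional L₀).mem_of_tendsto hz'lim
      (Filter.Eventually.of_forall fun k => (Submodule.mem_inf.mp (hz'K k)).2)
  have hxlimeq : ψ t₀ *ᵥ vlim2 = xlim := by
    have hcont3 : Continuous fun p : ℝ × (Fin n ⊕ Fin n → ℝ) => ψ p.1 *ᵥ p.2 :=
      (hψc.comp continuous_fst).matrix_mulVec continuous_snd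
    have h1 : Tendsto (fun k => ψ (s k) *ᵥ v k) atTop (𝓝 (ψ t₀ *ᵥ vlim2)) := by
      have h := (hcont3.tendsto (t₀, vlim2)).comp (hstends.prodMk_nhds hvlim)
      simpa only [Function.comp_def] using h
    have h2 : Tendsto (fun k => ψ (s k) *ᵥ v k) atTop (𝓝 xlim) := by
      have hfs : (fun k => ψ (s k) *ᵥ v k) = z' := funext hrec
      rw [hfs]; exact hz'lim
    exact tendsto_nhds_unique h1 h2
  have hxlimK : xlim ∈ K t₀ :=
    Submodule.mem_inf.mpr
      ⟨Submodule.mem_map.mpr ⟨vlim2, hvlim2L, by rw [Matrix.mulVecLin_apply, hxlimeq]⟩, hxlimL₀⟩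
  have hxlim0 : xlim ≠ 0 := by
    intro h
    rw [mem_sphere_zero_iff_norm, h, norm_zero] at hxlims
    exact zero_ne_one hxlims
  have ht₀Icc : t₀ ∈ Set.Icc a b := ht₀I
  have hKne : K t₀ ≠ ⊥ := by
    intro h
    rw [h, Submodule.mem_bot] at hxlimK
    exact hxlim0 hxlimK
  -- the crossing form degenerates at xlim, contradiction
  have key : ∀ u ∈ K t₀, ((J₀ n)ᵀ * ψ' t₀ * (ψ t₀)⁻¹).mulVec xlim ⬝ᵥ u = 0 := by
    intro u hu
    obtain ⟨bu, hbuL, hbu⟩ := Submodule.mem_map.mp (Submodule.mem_inf.mp hu).1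
    have huL₀ : u ∈ L₀ := (Submodule.mem_inf.mp hu).2
    have hbu' : ψ t₀ *ᵥ bu = u := by rw [← Matrix.mulVecLin_apply, hbu]
    -- the difference-quotient pairing vanishes along the sequence
    have hC : ∀ k, ω₀ n (((s k - t₀)⁻¹ • (ψ (s k) - ψ t₀)) *ᵥ v k) u = 0 := by
      intro k
      have hA : ω₀ n (z' k) u = 0 :=
        hL₀iso _ (Submodule.mem_inf.mp (hz'K k)).2 _ huL₀
      have hB : ω₀ n (ψ t₀ *ᵥ v k) u = 0 := by
        rw [← hbu', hsympform]
        exact hLiso _ (hvL k) _ hbuL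
      rw [Matrix.smul_mulVec, Matrix.sub_mulVec]
      unfold ω₀
      rw [Matrix.mulVec_smul, smul_dotProduct, Matrix.mulVec_sub,
        sub_dotProduct]
      unfold ω₀ at hA hB
      rw [hrec k] at *
      rw [hA, hB, sub_zero, smul_zero]
    -- the difference quotients of ψ converge to ψ'
    have hMlim : Tendsto (fun k => (s k - t₀)⁻¹ • (ψ (s k) - ψ t₀)) atTop (𝓝 (ψ' t₀)) := by
      show Tendsto (β := (Fin n ⊕ Fin n) → (Fin n ⊕ Fin n) → ℝ) _ atTop (𝓝 (ψ' t₀))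
      apply tendsto_pi_nhds.mpr
      intro i
      rw [tendsto_pi_nhds]
      intro j
      have hsin : Tendsto s atTop (𝓝[≠] t₀) :=
        tendsto_nhdsWithin_of_tendsto_nhds_of_eventually_within s hstends
          (Filter.Eventually.of_forall fun k => hsne k)
      have hslope := (hasDerivAt_iff_tendsto_slope.mp (hderiv i j t₀)).comp hsin
      convert hslope using 1
      funext k
      simp [slope_def_module, Matrix.smul_apply, Matrix.sub_apply]
    -- pass to the limit
    have hGc : Continuous fun p :
        Matrix (Fin n ⊕ Fin n) (Fin n ⊕ Fin n) ℝ × (Fin n ⊕ Fin n → ℝ) =>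
        ω₀ n (p.1 *ᵥ p.2) u := by
      unfold ω₀
      exact (continuous_const.matrix_mulVec
        (continuous_fst.matrix_mulVec continuous_snd)).dotProduct continuous_const
    have hGlim : Tendsto (fun k => ω₀ n (((s k - t₀)⁻¹ • (ψ (s k) - ψ t₀)) *ᵥ v k) u)
        atTop (𝓝 (ω₀ n (ψ' t₀ *ᵥ vlim2) u)) := by
      have h := (hGc.tendsto (ψ' t₀, vlim2)).comp (hMlim.prodMk_nhds hvlim)
      simpa only [Function.comp_def] using h
    have hfs : (fun k => ω₀ n (((s k - t₀)⁻¹ • (ψ (s k) - ψ t₀)) *ᵥ v k) u)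
        = fun _ => (0 : ℝ) := funext hC
    rw [hfs] at hGlim
    have hfinal : ω₀ n (ψ' t₀ *ᵥ vlim2) u = 0 :=
      tendsto_nhds_unique hGlim tendsto_const_nhds
    -- rewrite the crossing-form pairing
    have hrw : ((J₀ n)ᵀ * ψ' t₀ * (ψ t₀)⁻¹).mulVec xlim = (J₀ n)ᵀ *ᵥ (ψ' t₀ *ᵥ vlim2) := by
      rw [hvlim2def, Matrix.mulVec_mulVec, Matrix.mulVec_mulVec, Matrix.mul_assoc]
    rw [hrw, J₀_transpose, Matrix.neg_mulVec, neg_dotProduct]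
    unfold ω₀ at hfinal
    rw [hfinal, neg_zero]
  exact hxlim0 (hreg t₀ ht₀Icc hKne xlim hxlimK key)
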